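/- arXiv:math/0506512 — 3 statements merged into one kernel-verified Lean document; each statement's English description precedes it below -/
import Mathlib

section
/- Let U be an open subset of ℝ^d, μ a measure on U, and f a map from U to ℝ^n. Take v ≥ n, and suppose that for μ-almost every x₀ ∈ U one can find a ball B ⊂ U centered at x₀ such that for every γ > γ(v) one has Σ_{t=1}^∞ μ({x ∈ B : there exists q ∈ ℤ^{n+1} \ {0} with ‖g_t u_{f(x)} q‖ < 2^{-γt}}) < ∞. Then ω(f_*μ) ≤ v. -/
open MeasureTheory Metric Set Filter ENNReal

noncomputable section

namespace DK

/-- The (topological) support of a measure: points all of whose neighborhoods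
have positive measure. -/
def msupp {E : Type*} [TopologicalSpace E] [MeasurableSpace E] (μ : Measure E) : Set E :=
  {x | ∀ s ∈ nhds x, μ s ≠ 0}

/-- The sup-norm of an integer vector, as a real number. -/
def inorm {n : ℕ} (q : Fin n → ℤ) : ℝ := ‖(fun i => (q i : ℝ) : Fin n → ℝ)‖

/-- `y ∈ ℝⁿ` (viewed as a row vector / linear form) is `v`-approximable if there are
infinitely many integer vectors `q` such that `|y·q + p| < ‖q‖^{-v}` for some `p ∈ ℤ`. -/
def vApprox {n : ℕ} (v : ℝ) (y : Fin n → ℝ) : Prop :=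
  {q : Fin n → ℤ | ∃ p : ℤ, |(∑ i, y i * (q i : ℝ)) + (p : ℝ)| < inorm q ^ (-v)}.Infinite

/-- The Diophantine exponent `ω(y)`: the supremum of `v` such that `y` is `v`-approximable
(as an extended nonnegative real). -/
def diophExp {n : ℕ} (y : Fin n → ℝ) : ℝ≥0∞ :=
  sSup {e : ℝ≥0∞ | ∃ v : ℝ, 0 < v ∧ e = ENNReal.ofReal v ∧ vApprox v y}

/-- The Diophantine exponent `ω(ν)` of a measure `ν` on `ℝⁿ`:
`sup {v | ν({y | y is v-approximable}) > 0}`. -/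
def measDiophExp {n : ℕ} (ν : Measure (Fin n → ℝ)) : ℝ≥0∞ :=
  sSup {e : ℝ≥0∞ | ∃ v : ℝ, 0 < v ∧ e = ENNReal.ofReal v ∧ 0 < ν {y | vApprox v y}}

/-- `Π₊(q) = ∏_{qᵢ ≠ 0} |qᵢ|`. -/
def piPlus {n : ℕ} (q : Fin n → ℤ) : ℝ := ∏ i, if q i = 0 then 1 else |(q i : ℝ)|

/-- `y ∈ ℝⁿ` is `v`-multiplicatively approximable if there are infinitely many `q ∈ ℤⁿ`
with `|y·q + p| < Π₊(q)^{-v/n}` for some `p ∈ ℤ`. -/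
def vMultApprox {n : ℕ} (v : ℝ) (y : Fin n → ℝ) : Prop :=
  {q : Fin n → ℤ | ∃ p : ℤ, |(∑ i, y i * (q i : ℝ)) + (p : ℝ)| < piPlus q ^ (-(v / n))}.Infinite

/-- The multiplicative Diophantine exponent `ω^×(y)`. -/
def diophExpMult {n : ℕ} (y : Fin n → ℝ) : ℝ≥0∞ :=
  sSup {e : ℝ≥0∞ | ∃ v : ℝ, 0 < v ∧ e = ENNReal.ofReal v ∧ vMultApprox v y}

/-- The multiplicative Diophantine exponent `ω^×(ν)` of a measure on `ℝⁿ`. -/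
def measDiophExpMult {n : ℕ} (ν : Measure (Fin n → ℝ)) : ℝ≥0∞ :=
  sSup {e : ℝ≥0∞ | ∃ v : ℝ, 0 < v ∧ e = ENNReal.ofReal v ∧ 0 < ν {y | vMultApprox v y}}

/-- `g_t = diag(2^{nt}, 2^{-t}, …, 2^{-t})`. -/
def gMat (n : ℕ) (t : ℝ) : Matrix (Fin (n + 1)) (Fin (n + 1)) ℝ :=
  Matrix.diagonal (fun i => if i = 0 then (2 : ℝ) ^ ((n : ℝ) * t) else (2 : ℝ) ^ (-t))

/-- `u_y`: first row `(1, y₁, …, yₙ)`, identity `n × n` block in the lower right,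
zeros elsewhere. -/
def uMat {n : ℕ} (y : Fin n → ℝ) : Matrix (Fin (n + 1)) (Fin (n + 1)) ℝ :=
  Matrix.of fun i j =>
    if i = 0 then (if h : j = 0 then (1 : ℝ) else y (j.pred h))
    else if j = i then 1 else 0

/-- The sup-norm of the vector `g_t u_y q ∈ ℝ^{n+1}`, for an integer vector `q`. -/
def latNorm {n : ℕ} (t : ℝ) (y : Fin n → ℝ) (q : Fin (n + 1) → ℤ) : ℝ :=
  ‖(gMat n t * uMat y).mulVec (fun i => (q i : ℝ))‖

/-- `γ(v) = (v - n)/(n(v + 1))`. -/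
def gammaExp (n : ℕ) (v : ℝ) : ℝ := (v - (n : ℝ)) / ((n : ℝ) * (v + 1))

/-- `sup_{x ∈ s} |h x|`. -/
def supOn {d : ℕ} (h : (Fin d → ℝ) → ℝ) (s : Set (Fin d → ℝ)) : ℝ :=
  sSup ((fun x => |h x|) '' s)

/-- `h` is `(C, α)`-good on `V` with respect to `μ`: for every open ball `B ⊆ V`
centered in `supp μ` and every `ε > 0`,
`μ {z ∈ B | |h z| < ε} ≤ C (ε / ‖h‖_{μ,B})^α μ(B)`. -/
def IsGoodOn {d : ℕ} (C α : ℝ) (μ : Measure (Fin d → ℝ)) (V : Set (Fin d → ℝ))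
    (h : (Fin d → ℝ) → ℝ) : Prop :=
  ∀ (x : Fin d → ℝ) (r : ℝ), 0 < r → x ∈ msupp μ → ball x r ⊆ V → ∀ ε : ℝ, 0 < ε →
    μ {z ∈ ball x r | |h z| < ε} ≤
      ENNReal.ofReal (C * (ε / supOn h (ball x r ∩ msupp μ)) ^ α) * μ (ball x r)

/-- The affine combination `z ↦ c₀ + ∑ᵢ cᵢ fᵢ(z)` of `1, f₁, …, fₙ`. -/
def affComb {d n : ℕ} (c : Fin (n + 1) → ℝ) (f : (Fin d → ℝ) → (Fin n → ℝ)) :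
    (Fin d → ℝ) → ℝ :=
  fun z => c 0 + ∑ i : Fin n, c i.succ * f z i

/-- `f` is `μ`-good at `x` (relative to `U`): there are a neighborhood `V ⊆ U` of `x` and
`C, α > 0` such that every linear combination `c₀ + ∑ cᵢ fᵢ` is `(C, α)`-good on `V`
with respect to `μ`. -/
def MuGoodAt {d n : ℕ} (μ : Measure (Fin d → ℝ)) (U : Set (Fin d → ℝ))
    (f : (Fin d → ℝ) → (Fin n → ℝ)) (x : Fin d → ℝ) : Prop :=
  ∃ V ∈ nhds x, V ⊆ U ∧ ∃ C > 0, ∃ α > 0,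
    ∀ c : Fin (n + 1) → ℝ, IsGoodOn C α μ V (affComb c f)

/-- `f` is `μ`-nonplanar at `x`: for every neighborhood `B` of `x`, the image
`f(B ∩ supp μ)` is not contained in any proper affine subspace of `ℝⁿ`. -/
def MuNonplanarAt {d n : ℕ} (μ : Measure (Fin d → ℝ))
    (f : (Fin d → ℝ) → (Fin n → ℝ)) (x : Fin d → ℝ) : Prop :=
  ∀ B ∈ nhds x, ∀ L : AffineSubspace ℝ (Fin n → ℝ),
    f '' (B ∩ msupp μ) ⊆ (L : Set (Fin n → ℝ)) → L = ⊤

/-- `f` is `μ`-nonplanar in `L` at `x`: for every neighborhood `B` of `x`, the image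
`f(B ∩ supp μ)` is not contained in any proper affine subspace of `L`. -/
def MuNonplanarInAt {d n : ℕ} (μ : Measure (Fin d → ℝ)) (L : AffineSubspace ℝ (Fin n → ℝ))
    (f : (Fin d → ℝ) → (Fin n → ℝ)) (x : Fin d → ℝ) : Prop :=
  ∀ B ∈ nhds x, ∀ L' : AffineSubspace ℝ (Fin n → ℝ), L' < L →
    ¬ (f '' (B ∩ msupp μ) ⊆ (L' : Set (Fin n → ℝ)))

/-- `μ` is `D`-Federer on `U`: `μ(3B) ≤ D μ(B)` for every ball `B` centered in `supp μ`
with `3B ⊆ U`. -/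
def IsFedererOn {d : ℕ} (D : ℝ) (μ : Measure (Fin d → ℝ)) (U : Set (Fin d → ℝ)) : Prop :=
  ∀ (x : Fin d → ℝ) (r : ℝ), x ∈ msupp μ → 0 < r → ball x (3 * r) ⊆ U →
    μ (ball x (3 * r)) ≤ ENNReal.ofReal D * μ (ball x r)

/-- `μ` is Federer: for `μ`-a.e. point there are a neighborhood `U` and `D > 0` such that
`μ` is `D`-Federer on `U`. -/
def Federer {d : ℕ} (μ : Measure (Fin d → ℝ)) : Prop :=
  ∀ᵐ x ∂μ, ∃ U ∈ nhds x, ∃ D > 0, IsFedererOn D μ U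

/-- `μ` is absolutely `(C, α)`-decaying on `U`: for every ball `B = B(x, r) ⊆ U` centered
in `supp μ`, every affine hyperplane `L = {z | a·z = b}` (`a ≠ 0`) and every `ε > 0`,
`μ(B ∩ L^{(ε)}) ≤ C (ε/r)^α μ(B)`. -/
def AbsDecayingOn {d : ℕ} (C α : ℝ) (μ : Measure (Fin d → ℝ)) (U : Set (Fin d → ℝ)) : Prop :=
  ∀ (x : Fin d → ℝ) (r : ℝ), x ∈ msupp μ → 0 < r → ball x r ⊆ U →
    ∀ (a : Fin d → ℝ) (b : ℝ), a ≠ 0 → ∀ ε : ℝ, 0 < ε →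
      μ (ball x r ∩ Metric.thickening ε {z | (∑ i, a i * z i) = b}) ≤
        ENNReal.ofReal (C * (ε / r) ^ α) * μ (ball x r)

/-- `μ` is absolutely decaying: for `μ`-a.e. point there are a neighborhood `U` and
`C, α > 0` such that `μ` is absolutely `(C, α)`-decaying on `U`. -/
def AbsDecaying {d : ℕ} (μ : Measure (Fin d → ℝ)) : Prop :=
  ∀ᵐ x ∂μ, ∃ U ∈ nhds x, ∃ C > 0, ∃ α > 0, AbsDecayingOn C α μ U

/-- `μ` is absolutely friendly: absolutely decaying and Federer. -/
def AbsFriendly {d : ℕ} (μ : Measure (Fin d → ℝ)) : Prop :=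
  AbsDecaying μ ∧ Federer μ

/-- `μ` is `β`-scaling: `μ(B(x, r)) ≤ c rᵝ` for some `c > 0` and all balls. -/
def BetaScaling {d : ℕ} (β : ℝ) (μ : Measure (Fin d → ℝ)) : Prop :=
  ∃ c > (0 : ℝ), ∀ (x : Fin d → ℝ) (r : ℝ), 0 < r →
    μ (ball x r) ≤ ENNReal.ofReal (c * r ^ β)

/-- `dim_af(K)`: the supremum of `β > 0` such that `K` supports a nonzero `β`-scaling
absolutely friendly measure (with `sup ∅ = 0`). -/
def dimAf {n : ℕ} (K : Set (Fin n → ℝ)) : ℝ :=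
  sSup {β : ℝ | 0 < β ∧ ∃ μ : Measure (Fin n → ℝ),
    μ ≠ 0 ∧ BetaScaling β μ ∧ AbsFriendly μ ∧ msupp μ ⊆ K}

/-- `y ∈ ℝⁿ` is badly approximable: there is `c > 0` with `|y·q + p| > c ‖q‖^{-n}`
for all `q ∈ ℤⁿ \ {0}` and `p ∈ ℤ`. -/
def BadlyApprox {n : ℕ} (y : Fin n → ℝ) : Prop :=
  ∃ c > (0 : ℝ), ∀ q : Fin n → ℤ, q ≠ 0 → ∀ p : ℤ,
    c * inorm q ^ (-(n : ℝ)) < |(∑ i, y i * (q i : ℝ)) + (p : ℝ)|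

/-- `f` is `l`-nondegenerate at `x`: the partial derivatives of `f` at `x` of order
between `1` and `l` span `ℝⁿ`. -/
def lNondegenerateAt {d n : ℕ} (l : ℕ) (f : (Fin d → ℝ) → (Fin n → ℝ))
    (x : Fin d → ℝ) : Prop :=
  Submodule.span ℝ {w : Fin n → ℝ | ∃ j : ℕ, 1 ≤ j ∧ j ≤ l ∧
    ∃ m : Fin j → (Fin d → ℝ), w = iteratedFDeriv ℝ j f x m} = ⊤

/-- `f` is nondegenerate at `x` if it is `l`-nondegenerate at `x` for some `l`. -/
def NondegenerateAt {d n : ℕ} (f : (Fin d → ℝ) → (Fin n → ℝ)) (x : Fin d → ℝ) : Prop :=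
  ∃ l : ℕ, lNondegenerateAt l f x

end DK

private lemma vApprox_measurable (n : ℕ) (v : ℝ) :
    MeasurableSet {y : Fin n → ℝ | DK.vApprox v y} := by
  have heq : {y : Fin n → ℝ | DK.vApprox v y} =
      ⋂ F : Finset (Fin n → ℤ), ⋃ q : Fin n → ℤ, ⋃ _ : q ∉ F,
        {y : Fin n → ℝ | ∃ p : ℤ,
          |(∑ i, y i * (q i : ℝ)) + (p : ℝ)| < DK.inorm q ^ (-v)} := by
    ext y
    simp only [mem_setOf_eq, mem_iInter, mem_iUnion]
    constructor
    · intro hy F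
      obtain ⟨q, hq, hqF⟩ := Set.Infinite.exists_notMem_finset hy F
      exact ⟨q, hqF, hq⟩
    · intro hy
      by_contra hfin
      rw [DK.vApprox, Set.not_infinite] at hfin
      obtain ⟨q, hqF, hq⟩ := hy hfin.toFinset
      exact hqF (hfin.mem_toFinset.mpr hq)
  rw [heq]
  refine MeasurableSet.iInter fun F => MeasurableSet.iUnion fun q =>
    MeasurableSet.iUnion fun _ => ?_
  rw [Set.setOf_exists]
  refine MeasurableSet.iUnion fun p => ?_
  have : IsOpen {y : Fin n → ℝ |
      |(∑ i, y i * (q i : ℝ)) + (p : ℝ)| < DK.inorm q ^ (-v)} := by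
    apply isOpen_lt ?_ continuous_const
    exact (((continuous_finset_sum _ fun i _ =>
      (continuous_apply i).mul continuous_const).add continuous_const).abs)
  exact this.measurableSet

private lemma finite_small (n : ℕ) (R : ℝ) : {q : Fin n → ℤ | DK.inorm q < R}.Finite := by
  apply Set.Finite.subset (Set.Finite.pi'
    (t := fun _ : Fin n => Set.Icc (-⌈R⌉) ⌈R⌉) (fun _ => Set.finite_Icc _ _))
  intro q hq
  simp only [mem_setOf_eq] at hq ⊢
  intro i
  have h1 : |(q i : ℝ)| ≤ DK.inorm q := by
    have := norm_le_pi_norm (fun j => (q j : ℝ)) i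
    rw [Real.norm_eq_abs] at this
    exact this
  have h2 : |(q i : ℝ)| < R := lt_of_le_of_lt h1 hq
  rw [abs_lt] at h2
  have hceil := Int.le_ceil R
  constructor
  · have : -(⌈R⌉ : ℝ) ≤ (q i : ℝ) := by linarith [h2.1]
    exact_mod_cast this
  · have : (q i : ℝ) ≤ (⌈R⌉ : ℝ) := by linarith [h2.2]
    exact_mod_cast this

private lemma mulVec_coord {n : ℕ} (t : ℝ) (y : Fin n → ℝ) (p : ℤ) (q : Fin n → ℤ)
    (i : Fin (n + 1)) :
    (DK.gMat n t * DK.uMat y).mulVec (fun j => ((Fin.cons p q : Fin (n+1) → ℤ) j : ℝ)) i =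
      if h : i = 0 then (2:ℝ) ^ ((n:ℝ) * t) * ((p : ℝ) + ∑ j, y j * (q j : ℝ))
      else (2:ℝ) ^ (-t) * (q (i.pred h) : ℝ) := by
  have hu : (DK.uMat y).mulVec (fun j => ((Fin.cons p q : Fin (n+1) → ℤ) j : ℝ)) =
      Fin.cons ((p : ℝ) + ∑ j, y j * (q j : ℝ)) (fun j => (q j : ℝ)) := by
    funext k
    simp only [DK.uMat, Matrix.mulVec, dotProduct, Matrix.of_apply]
    rcases Fin.eq_zero_or_eq_succ k with rfl | ⟨j, rfl⟩
    · rw [Fin.sum_univ_succ]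
      simp [Fin.cons_zero, Fin.cons_succ, Fin.pred_succ, Fin.succ_ne_zero]
    · rw [Fin.sum_univ_succ]
      simp [Fin.cons_succ, Fin.succ_ne_zero, (Fin.succ_ne_zero j).symm,
        Finset.sum_ite_eq']
  rw [← Matrix.mulVec_mulVec, hu]
  unfold DK.gMat
  rw [Matrix.mulVec_diagonal]
  by_cases h : i = 0
  · subst h; simp
  · rw [if_neg h, dif_neg h]
    have hc := Fin.cons_succ (α := fun _ : Fin (n+1) => ℝ)
      ((p : ℝ) + ∑ j, y j * (q j : ℝ)) (fun j => (q j : ℝ)) (i.pred h)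
    rw [Fin.succ_pred] at hc
    rw [hc]

set_option maxHeartbeats 1000000 in
private lemma claim_ball {d n : ℕ} (hn : 1 ≤ n) (μ : Measure (Fin d → ℝ))
    (f : (Fin d → ℝ) → (Fin n → ℝ)) (v' γ : ℝ)
    (hv'n : (n : ℝ) < v') (hγ0 : 0 ≤ γ) (hγ2 : γ * (v' + 1) < v' - n)
    (x₀ : Fin d → ℝ) (r : ℝ)
    (hconv : (∑' t : ℕ, μ {x ∈ ball x₀ r | ∃ q : Fin (n + 1) → ℤ, q ≠ 0 ∧
        DK.latNorm ((t : ℝ) + 1) (f x) q < (2 : ℝ) ^ (-(γ * ((t : ℝ) + 1)))}) ≠ ⊤) :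
    μ ({x | DK.vApprox v' (f x)} ∩ ball x₀ r) = 0 := by
  have hlim := measure_limsup_atTop_eq_zero hconv
  refine measure_mono_null ?_ hlim
  rintro x ⟨hx1, hx2⟩
  rw [limsup_eq_iInf_iSup_of_nat]
  simp only [iInf_eq_iInter, iSup_eq_iUnion, mem_iInter, mem_iUnion]
  intro T
  -- basic positivity facts
  have hn1 : (1:ℝ) ≤ n := by exact_mod_cast hn
  have hv'pos : (0:ℝ) < v' := lt_of_le_of_lt (by positivity) hv'n
  have h1γ : 0 < 1 - γ := by nlinarith
  have hnγ : (0:ℝ) < (n:ℝ) + γ := by linarith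
  set δ : ℝ := v' / ((n:ℝ) + γ) - 1 / (1 - γ) with hδdef
  have hδ : 0 < δ := by
    rw [hδdef, sub_pos, div_lt_div_iff₀ h1γ hnγ]
    nlinarith
  -- pick a good rational approximation
  have hSy : {q : Fin n → ℤ | ∃ p : ℤ,
      |(∑ i, f x i * (q i : ℝ)) + (p : ℝ)| < DK.inorm q ^ (-v')}.Infinite := hx1
  set R : ℝ := (2:ℝ) ^ (max (1/δ) (T:ℝ)) with hR
  have hRpos : (0:ℝ) < R := Real.rpow_pos_of_pos two_pos _
  obtain ⟨q, hq⟩ := (hSy.diff (finite_small n R)).nonempty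
  obtain ⟨p, hp⟩ := hq.1
  have hQR : R ≤ DK.inorm q := not_lt.mp hq.2
  have hQpos : 0 < DK.inorm q := lt_of_lt_of_le hRpos hQR
  set L := Real.logb 2 (DK.inorm q) with hL
  have hQeq : DK.inorm q = (2:ℝ) ^ L := (Real.rpow_logb two_pos (by norm_num) hQpos).symm
  have hLmax : max (1/δ) (T:ℝ) ≤ L := by
    calc max (1/δ) (T:ℝ) = Real.logb 2 R := by
          rw [hR]; exact (Real.logb_rpow two_pos (by norm_num)).symm
    _ ≤ L := Real.logb_le_logb_of_le one_lt_two hRpos hQR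
  clear_value L
  clear_value R
  have h1δL : 1/δ ≤ L := le_trans (le_max_left _ _) hLmax
  have hTL : (T:ℝ) ≤ L := le_trans (le_max_right _ _) hLmax
  have hδL : 1 ≤ L * δ := (div_le_iff₀ hδ).mp h1δL
  have hL0 : (0:ℝ) ≤ L := le_trans (by positivity) h1δL
  -- choose the time s
  set s : ℕ := ⌊L / (1 - γ)⌋₊ + 1 with hs
  have hs1 : L / (1 - γ) < (s:ℝ) := by rw [hs]; push_cast; exact Nat.lt_floor_add_one _
  have hs2 : (s:ℝ) ≤ L / (1 - γ) + 1 := by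
    rw [hs]; push_cast
    have := Nat.floor_le (by positivity : (0:ℝ) ≤ L / (1-γ))
    linarith
  have hLdiv : L ≤ L / (1 - γ) := by
    rw [le_div_iff₀ h1γ]
    nlinarith [mul_nonneg hL0 hγ0]
  have hv'L : v' * L = ((n:ℝ)+γ) * (L/(1-γ)) + δ * (((n:ℝ)+γ) * L) := by
    rw [hδdef]; field_simp; ring
  clear_value δ
  have hTs : T < s := by
    have h1 : (T:ℝ) < (s:ℝ) := lt_of_le_of_lt (hTL.trans hLdiv) hs1
    exact_mod_cast h1
  have h1s : 1 ≤ s := by omega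
  clear_value s
  refine ⟨s - 1, by omega, ?_⟩
  have hcast : (((s - 1 : ℕ)) : ℝ) + 1 = (s : ℝ) := by
    push_cast [h1s]
    ring
  simp only [mem_setOf_eq, hcast]
  -- the candidate integer vector
  have hqne : q ≠ 0 := by
    rintro rfl
    have h0 : DK.inorm (0 : Fin n → ℤ) = 0 := by
      unfold DK.inorm
      have : (fun i => (((0 : Fin n → ℤ)) i : ℝ)) = (0 : Fin n → ℝ) := by
        funext i; simp
      rw [this, norm_zero]
    rw [h0] at hQpos
    exact lt_irrefl 0 hQpos
  have hconsne : (Fin.cons p q : Fin (n+1) → ℤ) ≠ 0 := by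
    obtain ⟨j, hj⟩ := Function.ne_iff.mp hqne
    intro hc
    apply hj
    have := congrFun hc j.succ
    simpa [Fin.cons_succ] using this
  refine ⟨hx2, Fin.cons p q, hconsne, ?_⟩
  -- exponent bookkeeping
  have hmain1 : (((n:ℝ) + γ)) * (s:ℝ) ≤ v' * L := by
    rw [hv'L]
    have e1 := mul_le_mul_of_nonneg_left hs2 hnγ.le
    have e2 := mul_le_mul_of_nonneg_left hδL hnγ.le
    nlinarith [e1, e2]
  have hmain2 : L < (1 - γ) * (s:ℝ) := by
    have := (div_lt_iff₀ h1γ).mp hs1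
    linarith
  -- the norm bound, coordinatewise
  have hcpos : (0:ℝ) < (2:ℝ) ^ (-(γ * (s:ℝ))) := Real.rpow_pos_of_pos two_pos _
  unfold DK.latNorm
  rw [pi_norm_lt_iff hcpos]
  intro i
  rw [mulVec_coord]
  by_cases hi : i = 0
  · rw [dif_pos hi]
    have h1 : |(p:ℝ) + ∑ j, f x j * (q j:ℝ)| < DK.inorm q ^ (-v') := by
      rw [add_comm]; exact hp
    have h2 : DK.inorm q ^ (-v') = (2:ℝ) ^ (L * (-v')) := by
      rw [hQeq]; exact (Real.rpow_mul (by norm_num) L (-v')).symm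
    rw [Real.norm_eq_abs, abs_mul, abs_of_pos (Real.rpow_pos_of_pos two_pos _)]
    calc (2:ℝ) ^ ((n:ℝ)*(s:ℝ)) * |(p:ℝ) + ∑ j, f x j * (q j:ℝ)|
        < (2:ℝ) ^ ((n:ℝ)*(s:ℝ)) * (2:ℝ) ^ (L * (-v')) := by
          apply mul_lt_mul_of_pos_left _ (Real.rpow_pos_of_pos two_pos _)
          rw [← h2]; exact h1
      _ = (2:ℝ) ^ ((n:ℝ)*(s:ℝ) + L * (-v')) := (Real.rpow_add two_pos _ _).symm
      _ ≤ (2:ℝ) ^ (-(γ * (s:ℝ))) := by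
          apply Real.rpow_le_rpow_of_exponent_le one_le_two
          nlinarith [hmain1]
  · rw [dif_neg hi]
    have hqi : |(q (i.pred hi) : ℝ)| ≤ DK.inorm q := by
      have h := norm_le_pi_norm (fun j => (q j : ℝ)) (i.pred hi)
      rw [Real.norm_eq_abs] at h
      exact h
    rw [Real.norm_eq_abs, abs_mul, abs_of_pos (Real.rpow_pos_of_pos two_pos _)]
    calc (2:ℝ) ^ (-(s:ℝ)) * |(q (i.pred hi) : ℝ)|
        ≤ (2:ℝ) ^ (-(s:ℝ)) * (2:ℝ) ^ L := by
          apply mul_le_mul_of_nonneg_left _ (Real.rpow_pos_of_pos two_pos _).le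
          rw [← hQeq]; exact hqi
      _ = (2:ℝ) ^ (-(s:ℝ) + L) := (Real.rpow_add two_pos _ _).symm
      _ < (2:ℝ) ^ (-(γ * (s:ℝ))) := by
          apply Real.rpow_lt_rpow_of_exponent_lt one_lt_two
          nlinarith [hmain2]

/-- Borel–Cantelli criterion: if for `μ`-a.e. `x₀ ∈ U` there is a ball
`B ⊆ U` centered at `x₀` such that for every `γ > γ(v)` the series
`∑_{t ≥ 1} μ {x ∈ B | g_t u_{f(x)} ℤ^{n+1} has a nonzero vector of norm < 2^{-γt}}`
converges, then `ω(f_*μ) ≤ v`. -/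
theorem stmt3 {d n : ℕ} (U : Set (Fin d → ℝ)) (hUopen : IsOpen U)
    (μ : Measure (Fin d → ℝ)) (f : (Fin d → ℝ) → (Fin n → ℝ))
    (v : ℝ) (hv : (n : ℝ) ≤ v)
    (h : ∀ᵐ x₀ ∂μ.restrict U, ∃ r > (0 : ℝ), ball x₀ r ⊆ U ∧
      ∀ γ : ℝ, DK.gammaExp n v < γ →
        (∑' t : ℕ, μ {x ∈ ball x₀ r | ∃ q : Fin (n + 1) → ℤ, q ≠ 0 ∧
          DK.latNorm ((t : ℝ) + 1) (f x) q < (2 : ℝ) ^ (-(γ * ((t : ℝ) + 1)))}) < ⊤) :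
    DK.measDiophExp ((μ.restrict U).map f) ≤ ENNReal.ofReal v := by
  classical
  have key : ∀ v'' : ℝ, v < v'' → ((μ.restrict U).map f) {y | DK.vApprox v'' y} = 0 := by
    intro v'' hvv'
    by_cases hfm : AEMeasurable f (μ.restrict U)
    swap
    · rw [Measure.map_of_not_aemeasurable hfm]; rfl
    rw [Measure.map_apply_of_aemeasurable hfm (vApprox_measurable n v''),
      Measure.restrict_apply' hUopen.measurableSet]
    rcases Nat.eq_zero_or_pos n with hn0 | hn
    · subst hn0
      haveI : Finite (Fin 0 → ℤ) := Finite.of_subsingleton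
      have hemp : f ⁻¹' {y | DK.vApprox v'' y} = ∅ := by
        ext x
        simp only [mem_preimage, mem_setOf_eq, mem_empty_iff_false, iff_false]
        intro hy
        exact hy (Set.toFinite _)
      rw [hemp, Set.empty_inter, measure_empty]
    · have hn1 : (1:ℝ) ≤ n := by exact_mod_cast hn
      have hv'n : (n:ℝ) < v'' := lt_of_le_of_lt hv hvv'
      have hv0 : (0:ℝ) < v + 1 := by linarith
      have hv'0 : (0:ℝ) < v'' + 1 := by linarith
      have hnpos : (0:ℝ) < (n:ℝ) := by exact_mod_cast hn
      have hd : (0:ℝ) < (n:ℝ)*(v+1) := mul_pos hnpos hv0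
      have hd' : (0:ℝ) < (n:ℝ)*(v''+1) := mul_pos hnpos hv'0
      set g := DK.gammaExp n v with hg
      set g' := DK.gammaExp n v'' with hg'
      have hgg' : g < g' := by
        rw [hg, hg']
        unfold DK.gammaExp
        rw [div_lt_div_iff₀ hd hd']
        nlinarith [mul_pos hnpos (mul_pos (sub_pos.mpr hvv')
          (by linarith : (0:ℝ) < 1 + (n:ℝ)))]
      have hg0 : (0:ℝ) ≤ g := by
        rw [hg]; unfold DK.gammaExp
        exact div_nonneg (by linarith) hd.le
      set γ := (g + g')/2 with hγ
      have hγg : g < γ := by rw [hγ]; linarith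
      have hγ0 : (0:ℝ) ≤ γ := by rw [hγ]; linarith
      have hγg' : γ < g' := by rw [hγ]; linarith
      have hγ2 : γ * (v'' + 1) < v'' - n := by
        have h1 : γ * ((n:ℝ)*(v''+1)) < v'' - n := by
          rw [← lt_div_iff₀ hd']
          calc γ < g' := hγg'
            _ = (v'' - (n:ℝ))/((n:ℝ)*(v''+1)) := by rw [hg']; rfl
        have h2 : γ * (v''+1) ≤ γ * ((n:ℝ)*(v''+1)) := by
          apply mul_le_mul_of_nonneg_left _ hγ0
          nlinarith
        linarith
      -- the set whose measure we bound
      set S := f ⁻¹' {y | DK.vApprox v'' y} ∩ U with hS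
      set Gset : Set (Fin d → ℝ) := {x₀ | ∃ r > (0 : ℝ), ball x₀ r ⊆ U ∧
        ∀ γ' : ℝ, g < γ' →
          (∑' t : ℕ, μ {x ∈ ball x₀ r | ∃ q : Fin (n + 1) → ℤ, q ≠ 0 ∧
            DK.latNorm ((t : ℝ) + 1) (f x) q < (2 : ℝ) ^ (-(γ' * ((t : ℝ) + 1)))}) < ⊤}
        with hGset
      have hbad : μ (Gsetᶜ ∩ U) = 0 := by
        have h0 := ae_iff.mp h
        rwa [Measure.restrict_apply' hUopen.measurableSet] at h0
      have hball : ∀ x : ↥(S ∩ Gset), ∃ rr > (0:ℝ),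
          μ (S ∩ ball (x : Fin d → ℝ) rr) = 0 := by
        rintro ⟨x, hxS, hxG⟩
        obtain ⟨rr, hrr, hsub, hconv⟩ := hxG
        refine ⟨rr, hrr, ?_⟩
        have h0 := claim_ball hn μ f v'' γ hv'n hγ0 hγ2 x rr (hconv γ hγg).ne
        refine measure_mono_null ?_ h0
        rintro z ⟨hz1, hz2⟩
        exact ⟨hz1.1, hz2⟩
      choose rr hrr hnull using hball
      obtain ⟨Tc, hTcc, hTcov⟩ := TopologicalSpace.isOpen_iUnion_countable
        (fun x : ↥(S ∩ Gset) => ball (x : Fin d → ℝ) (rr x)) (fun _ => isOpen_ball)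
      refine le_antisymm ?_ zero_le
      have hcover : S ⊆ (Gsetᶜ ∩ U) ∪
          ⋃ x ∈ Tc, (S ∩ ball (x : Fin d → ℝ) (rr x)) := by
        intro z hz
        by_cases hzG : z ∈ Gset
        · right
          have hz' : z ∈ ⋃ x : ↥(S ∩ Gset), ball (x : Fin d → ℝ) (rr x) :=
            mem_iUnion.mpr ⟨⟨z, hz, hzG⟩, mem_ball_self (hrr _)⟩
          rw [← hTcov] at hz'
          obtain ⟨x, hxT, hxb⟩ := mem_iUnion₂.mp hz'
          exact mem_iUnion₂.mpr ⟨x, hxT, hz, hxb⟩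
        · left
          exact ⟨hzG, hz.2⟩
      calc μ S ≤ μ ((Gsetᶜ ∩ U)) + μ (⋃ x ∈ Tc, (S ∩ ball (x : Fin d → ℝ) (rr x))) :=
            le_trans (measure_mono hcover) (measure_union_le _ _)
        _ = 0 := by
            rw [hbad, zero_add]
            exact (measure_biUnion_null_iff hTcc).mpr fun x _ => hnull x
  unfold DK.measDiophExp
  apply sSup_le
  rintro e ⟨v'', hv''pos, rfl, hν⟩
  by_cases hle : v'' ≤ v
  · exact ENNReal.ofReal_le_ofReal hle
  · rw [key v'' (not_le.mp hle)] at hν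
    exact absurd hν (lt_irrefl 0)
end
end

section
/- For Lebesgue-almost every y ∈ ℝ^n one has ω^×(y) = n; that is, Lebesgue measure on ℝ^n is strongly extremal. -/
open MeasureTheory Metric Set Filter ENNReal

noncomputable section

-- ===== auxiliary lemmas for stmt14 =====

open Function in
lemma aux_tsum_pi_prod (W : ℤ → ℝ≥0∞) : ∀ m : ℕ, ∑' q : Fin m → ℤ, ∏ i, W (q i) = (∑' k : ℤ, W k) ^ m := by
  intro m
  induction m with
  | zero => rw [tsum_eq_single (fun i => i.elim0) (by intro b hb; exact absurd (Subsingleton.elim _ _) hb)]; simp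
  | succ m ih =>
    rw [← Equiv.tsum_eq (Fin.consEquiv (fun _ => ℤ)) (fun q => ∏ i, W (q i))]
    have : ∀ p : ℤ × (Fin m → ℤ), ∏ i, W ((Fin.consEquiv (fun _ => ℤ)) p i) = W p.1 * ∏ i, W (p.2 i) := by
      rintro ⟨a, b⟩; simp [Fin.prod_univ_succ]
    rw [tsum_congr this, ENNReal.tsum_prod (f := fun (a:ℤ) (z : Fin m → ℤ) => W a * ∏ i, W (z i))]
    simp_rw [ENNReal.tsum_mul_left, ENNReal.tsum_mul_right]
    rw [ih, pow_succ, mul_comm]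

lemma aux_one_le_piPlus {n : ℕ} (q : Fin n → ℤ) : 1 ≤ DK.piPlus q := by
  rw [DK.piPlus]
  calc (1:ℝ) = ∏ _i : Fin n, 1 := by simp
    _ ≤ _ := Finset.prod_le_prod (by intros; norm_num) ?_
  intro i _
  by_cases h : q i = 0
  · simp [h]
  · simp only [h, if_false]
    rw [← Int.cast_abs]
    exact_mod_cast Int.one_le_abs (by simpa using h)

lemma aux_piPlus_pos {n : ℕ} (q : Fin n → ℤ) : 0 < DK.piPlus q :=
  lt_of_lt_of_le one_pos (aux_one_le_piPlus q)

lemma aux_tsum_piPlus_ne_top {k : ℕ} {s : ℝ} (hs : 1 < s) :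
    ∑' q : Fin k → ℤ, ENNReal.ofReal (DK.piPlus q ^ (-s)) ≠ ⊤ := by
  set W : ℤ → ℝ≥0∞ := fun a => if a = 0 then 1 else ENNReal.ofReal (|(a:ℝ)| ^ (-s)) with hW
  have hprod : ∀ q : Fin k → ℤ, ENNReal.ofReal (DK.piPlus q ^ (-s)) = ∏ i, W (q i) := by
    intro q
    rw [DK.piPlus, ← Real.finset_prod_rpow Finset.univ _ (fun i _ => by positivity) (-s),
      ENNReal.ofReal_prod_of_nonneg (fun i _ => by positivity)]
    apply Finset.prod_congr rfl
    intro i _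
    by_cases h : q i = 0 <;> simp [h, hW]
  rw [tsum_congr hprod, aux_tsum_pi_prod]
  apply ENNReal.pow_ne_top
  have hWle : ∀ a : ℤ, W a ≤ (if a = 0 then (1:ℝ≥0∞) else 0) + ENNReal.ofReal (|(a:ℝ)| ^ (-s)) := by
    intro a
    by_cases h : a = 0
    · simp [h, hW, Real.zero_rpow (by linarith : -s ≠ 0)]
    · simp [h, hW]
  have h1 : ∑' a : ℤ, (if a = 0 then (1:ℝ≥0∞) else 0) = 1 := tsum_ite_eq (0:ℤ) 1
  have hsummable := Real.summable_abs_int_rpow hs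
  have h2 : ∑' a : ℤ, ENNReal.ofReal (|(a:ℝ)| ^ (-s)) ≠ ⊤ := by
    rw [← ENNReal.ofReal_tsum_of_nonneg (fun a => by positivity) hsummable]
    exact ENNReal.ofReal_ne_top
  have hle := Summable.tsum_le_tsum hWle ENNReal.summable ENNReal.summable
  rw [ENNReal.tsum_add, h1] at hle
  exact ne_top_of_le_ne_top (ENNReal.add_ne_top.mpr ⟨ENNReal.one_ne_top, h2⟩) hle

lemma aux_slice_vol {n : ℕ} (q : Fin (n+1) → ℤ) (i₀ : Fin (n+1)) (hq : q i₀ ≠ 0) (p : ℤ)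
    (δ R : ℝ) (hδ : 0 < δ) (hR : 0 ≤ R) :
    volume {y : Fin (n+1) → ℝ | (∀ j, |y j| ≤ R) ∧ |(∑ i, y i * (q i:ℝ)) + (p:ℝ)| < δ} ≤
      ENNReal.ofReal ((2*R)^n * (2 * (δ / |(q i₀ : ℝ)|))) := by
  have ha : (q i₀ : ℝ) ≠ 0 := Int.cast_ne_zero.mpr hq
  set a : ℝ := (q i₀ : ℝ) with ha_def
  set e := MeasurableEquiv.piFinSuccAbove (fun _ : Fin (n+1) => ℝ) i₀ with he
  have hMP := measurePreserving_piFinSuccAbove (fun _ : Fin (n+1) => (volume : Measure ℝ)) i₀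
  set T : Set (ℝ × (Fin n → ℝ)) :=
    {z | (∀ j, |z.2 j| ≤ R) ∧ |z.1 * a + ((p:ℝ) + ∑ j, z.2 j * (q (i₀.succAbove j) : ℝ))| < δ} with hT_def
  have hbox : MeasurableSet {z : Fin n → ℝ | ∀ j, |z j| ≤ R} := by
    rw [Set.setOf_forall]
    exact MeasurableSet.iInter fun j =>
      measurableSet_le ((continuous_abs.comp (continuous_apply j)).measurable) measurable_const
  have hcont : Continuous fun z : ℝ × (Fin n → ℝ) =>
      |z.1 * a + ((p:ℝ) + ∑ j, z.2 j * (q (i₀.succAbove j) : ℝ))| := by fun_prop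
  have hT : MeasurableSet T := by
    apply MeasurableSet.inter
    · exact hbox.preimage measurable_snd
    · exact measurableSet_lt hcont.measurable measurable_const
  have hsub : {y : Fin (n+1) → ℝ | (∀ j, |y j| ≤ R) ∧ |(∑ i, y i * (q i:ℝ)) + (p:ℝ)| < δ} ⊆ e ⁻¹' T := by
    intro y hy
    constructor
    · intro j; exact hy.1 _
    · have hsum : (∑ i, y i * (q i:ℝ)) = y i₀ * a + ∑ j, y (i₀.succAbove j) * (q (i₀.succAbove j):ℝ) :=
        Fin.sum_univ_succAbove (fun i => y i * (q i : ℝ)) i₀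
      have h2 := hy.2
      rw [hsum] at h2
      show |y i₀ * a + ((p:ℝ) + ∑ j, y (i₀.succAbove j) * (q (i₀.succAbove j):ℝ))| < δ
      rw [show y i₀ * a + ((p:ℝ) + ∑ j, y (i₀.succAbove j) * (q (i₀.succAbove j):ℝ))
        = y i₀ * a + ∑ j, y (i₀.succAbove j) * (q (i₀.succAbove j):ℝ) + (p:ℝ) by ring]
      exact h2
  calc volume {y : Fin (n+1) → ℝ | (∀ j, |y j| ≤ R) ∧ |(∑ i, y i * (q i:ℝ)) + (p:ℝ)| < δ}
      ≤ volume (e ⁻¹' T) := measure_mono hsub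
    _ = ((volume : Measure ℝ).prod (volume : Measure (Fin n → ℝ))) T := by
        have := hMP.measure_preimage hT.nullMeasurableSet
        simpa [volume_pi, he] using this
    _ ≤ ENNReal.ofReal ((2*R)^n * (2 * (δ / |a|))) := by
        rw [Measure.prod_apply_symm hT]
        have hbd : ∀ z : Fin n → ℝ, volume ((fun x => (x, z)) ⁻¹' T) ≤
            Set.indicator {z : Fin n → ℝ | ∀ j, |z j| ≤ R} (fun _ => ENNReal.ofReal (2 * (δ / |a|))) z := by
          intro z
          by_cases hz : ∀ j, |z j| ≤ R
          · rw [Set.indicator_of_mem (show z ∈ {z : Fin n → ℝ | ∀ j, |z j| ≤ R} from hz)]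
            set c : ℝ := (p:ℝ) + ∑ j, z j * (q (i₀.succAbove j) : ℝ) with hc
            have hsubball : ((fun x => (x, z)) ⁻¹' T) ⊆ Metric.ball (-(c/a)) (δ/|a|) := by
              intro x hx
              have hx2 : |x * a + c| < δ := hx.2
              rw [Metric.mem_ball, Real.dist_eq, show x - -(c/a) = (x*a+c)/a by field_simp; ring, abs_div]
              have hapos : (0:ℝ) < |a| := abs_pos.mpr ha
              gcongr
            calc volume ((fun x => (x, z)) ⁻¹' T) ≤ volume (Metric.ball (-(c/a)) (δ/|a|)) :=
                  measure_mono hsubball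
              _ = ENNReal.ofReal (2 * (δ/|a|)) := by rw [Real.volume_ball]
          · have hempty : ((fun x => (x, z)) ⁻¹' T) = ∅ := by
              ext x; simp only [Set.mem_preimage, Set.mem_empty_iff_false, iff_false]
              intro hx; exact hz hx.1
            rw [hempty, Set.indicator_of_notMem (show z ∉ {z : Fin n → ℝ | ∀ j, |z j| ≤ R} from hz)]; simp
        calc ∫⁻ z, volume ((fun x => (x, z)) ⁻¹' T) ∂(volume : Measure (Fin n → ℝ))
            ≤ ∫⁻ z, Set.indicator {z : Fin n → ℝ | ∀ j, |z j| ≤ R} (fun _ => ENNReal.ofReal (2 * (δ / |a|))) z ∂volume :=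
              lintegral_mono hbd
          _ = ENNReal.ofReal (2 * (δ / |a|)) * volume {z : Fin n → ℝ | ∀ j, |z j| ≤ R} :=
              lintegral_indicator_const hbox _
          _ ≤ ENNReal.ofReal ((2*R)^n * (2 * (δ / |a|))) := by
              have hset : {z : Fin n → ℝ | ∀ j, |z j| ≤ R} = Set.pi Set.univ (fun _ => Set.Icc (-R) R) := by
                ext z
                constructor
                · intro h j _; exact abs_le.mp (h j)
                · intro h j; exact abs_le.mpr (h j (Set.mem_univ j))
              have h2R : R - -R = 2*R := by ring
              have hvol : volume {z : Fin n → ℝ | ∀ j, |z j| ≤ R} = ENNReal.ofReal (2*R) ^ n := by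
                rw [hset, volume_pi_pi]
                simp only [Real.volume_Icc, h2R, Finset.prod_const, Finset.card_univ, Fintype.card_fin]
              rw [hvol, ← ENNReal.ofReal_pow (by linarith : (0:ℝ) ≤ 2*R),
                ← ENNReal.ofReal_mul (by positivity), mul_comm]

lemma aux_box_null (m : ℕ) (v : ℝ) (hv : ((m+1:ℕ):ℝ) < v) (R : ℕ) :
    volume {y : Fin (m+1) → ℝ | (∀ j, |y j| ≤ (R:ℝ)) ∧ DK.vMultApprox v y} = 0 := by
  have hnpos : (0:ℝ) < ((m+1:ℕ):ℝ) := by positivity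
  set s' : ℝ := v / ((m+1:ℕ):ℝ) with hs'def
  have hs' : 1 < s' := (one_lt_div hnpos).mpr hv
  set δ : (Fin (m+1) → ℤ) → ℝ := fun q => DK.piPlus q ^ (-s') with hδdef
  have hδpos : ∀ q, 0 < δ q := fun q => Real.rpow_pos_of_pos (aux_piPlus_pos q) _
  have hδle1 : ∀ q, δ q ≤ 1 := fun q =>
    Real.rpow_le_one_of_one_le_of_nonpos (aux_one_le_piPlus q) (by linarith)
  set A : ℝ := 2*(m+1)*R + 5 with hAdef
  set C : ℝ := A * ((2*(R:ℝ))^m * 2) with hCdef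
  set s : (Fin (m+1) → ℤ) → Set (Fin (m+1) → ℝ) := fun q =>
    if q = 0 then ∅ else
      {y | (∀ j, |y j| ≤ (R:ℝ)) ∧ ∃ p : ℤ, |(∑ i, y i * (q i:ℝ)) + (p:ℝ)| < δ q} with hsdef
  have key : ∀ q, volume (s q) ≤ ENNReal.ofReal (C * δ q) := by
    intro q
    by_cases hq0 : q = 0
    · simp [hsdef, hq0]
    · rw [hsdef]; simp only [hq0, if_false]
      obtain ⟨i₀, -, hmax⟩ := Finset.exists_max_image Finset.univ (fun i => |q i|) ⟨0, Finset.mem_univ 0⟩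
      have hqi₀ : q i₀ ≠ 0 := by
        obtain ⟨i, hi⟩ := Function.ne_iff.mp hq0
        intro h0
        have := hmax i (Finset.mem_univ i)
        rw [h0] at this
        simp only [abs_zero] at this
        exact hi (by simpa using abs_nonpos_iff.mp this)
      set M : ℝ := |(q i₀ : ℝ)| with hMdef
      have hM1 : 1 ≤ M := by
        rw [hMdef, ← Int.cast_abs]
        exact_mod_cast Int.one_le_abs hqi₀
      have hMpos : 0 < M := lt_of_lt_of_le one_pos hM1
      have hqle : ∀ i, |(q i : ℝ)| ≤ M := by
        intro i
        rw [hMdef, ← Int.cast_abs, ← Int.cast_abs]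
        exact_mod_cast hmax i (Finset.mem_univ i)
      set K : ℤ := ⌈((m+1:ℕ):ℝ) * R * M⌉ + 1 with hKdef
      have hKpos : 0 < K := by
        have : (0:ℝ) ≤ ((m+1:ℕ):ℝ) * R * M := by positivity
        have := Int.ceil_nonneg this
        omega
    -- covering by p
      have hcover : {y : Fin (m+1) → ℝ | (∀ j, |y j| ≤ (R:ℝ)) ∧ ∃ p : ℤ, |(∑ i, y i * (q i:ℝ)) + (p:ℝ)| < δ q}
          ⊆ ⋃ p ∈ Finset.Icc (-K) K,
            {y : Fin (m+1) → ℝ | (∀ j, |y j| ≤ (R:ℝ)) ∧ |(∑ i, y i * (q i:ℝ)) + (p:ℝ)| < δ q} := by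
        rintro y ⟨hybox, p, hp⟩
        have hsb : |∑ i, y i * (q i:ℝ)| ≤ ((m+1:ℕ):ℝ) * R * M := by
          calc |∑ i, y i * (q i:ℝ)| ≤ ∑ i, |y i * (q i:ℝ)| := Finset.abs_sum_le_sum_abs _ _
            _ ≤ ∑ _i : Fin (m+1), (R:ℝ) * M := by
                apply Finset.sum_le_sum
                intro i _
                rw [abs_mul]
                exact mul_le_mul (hybox i) (hqle i) (abs_nonneg _) (Nat.cast_nonneg R)
            _ = ((m+1:ℕ):ℝ) * R * M := by
                rw [Finset.sum_const, Finset.card_univ, Fintype.card_fin, nsmul_eq_mul]; ring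
        have hpb : |(p:ℝ)| ≤ (K:ℝ) := by
          have h1 : |(p:ℝ)| ≤ |∑ i, y i * (q i:ℝ)| + 1 := by
            have := abs_sub_abs_le_abs_sub ((p:ℝ)) (-(∑ i, y i * (q i:ℝ)))
            have h2 : |(p:ℝ)| - |∑ i, y i * (q i:ℝ)| ≤ |(∑ i, y i * (q i:ℝ)) + (p:ℝ)| := by
              rw [abs_neg] at this
              calc |(p:ℝ)| - |∑ i, y i * (q i:ℝ)| ≤ |(p:ℝ) - -(∑ i, y i * (q i:ℝ))| := this
                _ = |(∑ i, y i * (q i:ℝ)) + (p:ℝ)| := by rw [sub_neg_eq_add, add_comm]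
            linarith [hp, hδle1 q]
          calc |(p:ℝ)| ≤ ((m+1:ℕ):ℝ) * R * M + 1 := by linarith
            _ ≤ (K:ℝ) := by
                have hceil := Int.le_ceil (((m+1:ℕ):ℝ) * (R:ℝ) * M)
                rw [hKdef]
                push_cast at hceil ⊢
                linarith
        have hpK : p ∈ Finset.Icc (-K) K := by
          rw [Finset.mem_Icc]
          constructor
          · have : -(K:ℝ) ≤ (p:ℝ) := by
              have := neg_abs_le ((p:ℝ)); linarith
            exact_mod_cast this
          · have : (p:ℝ) ≤ (K:ℝ) := le_trans (le_abs_self _) hpb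
            exact_mod_cast this
        exact Set.mem_biUnion hpK ⟨hybox, hp⟩
      have hcard : ((Finset.Icc (-K) K).card : ℝ) ≤ A * M := by
        have hc : (Finset.Icc (-K) K).card = (K + 1 - -K).toNat := Int.card_Icc _ _
        have hc2 : (Finset.Icc (-K) K).card = (2*K+1).toNat := by rw [hc]; congr 1; ring
        have hcr : ((Finset.Icc (-K) K).card : ℝ) = 2*(K:ℝ) + 1 := by
          have h := Int.toNat_of_nonneg (show (0:ℤ) ≤ 2*K+1 by omega)
          rw [hc2]
          exact_mod_cast congrArg (fun z : ℤ => (z : ℝ)) h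
        have hKle : (K:ℝ) ≤ ((m+1:ℕ):ℝ) * R * M + 2 := by
          have hceil := Int.ceil_lt_add_one (((m+1:ℕ):ℝ) * (R:ℝ) * M)
          rw [hKdef]
          push_cast at hceil ⊢
          linarith
        rw [hcr, hAdef]
        push_cast at hKle ⊢
        nlinarith [hM1, (Nat.cast_nonneg R : (0:ℝ) ≤ (R:ℝ)), hMpos, hKle]
      calc volume {y : Fin (m+1) → ℝ | (∀ j, |y j| ≤ (R:ℝ)) ∧ ∃ p : ℤ, |(∑ i, y i * (q i:ℝ)) + (p:ℝ)| < δ q}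
          ≤ ∑ p ∈ Finset.Icc (-K) K,
              volume {y : Fin (m+1) → ℝ | (∀ j, |y j| ≤ (R:ℝ)) ∧ |(∑ i, y i * (q i:ℝ)) + (p:ℝ)| < δ q} :=
            le_trans (measure_mono hcover) (measure_biUnion_finset_le _ _)
        _ ≤ ∑ _p ∈ Finset.Icc (-K) K, ENNReal.ofReal ((2*(R:ℝ))^m * (2 * (δ q / M))) := by
            apply Finset.sum_le_sum
            intro p _
            exact aux_slice_vol q i₀ hqi₀ p (δ q) R (hδpos q) (Nat.cast_nonneg R)
        _ = ((Finset.Icc (-K) K).card : ℝ≥0∞) * ENNReal.ofReal ((2*(R:ℝ))^m * (2 * (δ q / M))) := by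
            rw [Finset.sum_const, nsmul_eq_mul]
        _ ≤ ENNReal.ofReal (C * δ q) := by
            rw [← ENNReal.ofReal_natCast, ← ENNReal.ofReal_mul (by positivity)]
            apply ENNReal.ofReal_le_ofReal
            have e1 : ((Finset.Icc (-K) K).card : ℝ) * ((2*(R:ℝ))^m * (2 * (δ q / M)))
                = (((Finset.Icc (-K) K).card : ℝ) / M) * ((2*(R:ℝ))^m * 2 * δ q) := by
              ring
            have e2 : C * δ q = A * ((2*(R:ℝ))^m * 2 * δ q) := by rw [hCdef]; ring
            rw [e1, e2]
            apply mul_le_mul_of_nonneg_right _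
              (mul_nonneg (mul_nonneg (by positivity) (by norm_num)) (hδpos q).le)
            rw [div_le_iff₀ hMpos]
            exact hcard
      -- done key
  have hsum_ne_top : ∑' q : Fin (m+1) → ℤ, volume (s q) ≠ ⊤ := by
    apply ne_top_of_le_ne_top _ (ENNReal.tsum_le_tsum key)
    have : ∀ q : Fin (m+1) → ℤ, ENNReal.ofReal (C * δ q) = ENNReal.ofReal C * ENNReal.ofReal (δ q) := by
      intro q
      exact ENNReal.ofReal_mul (by positivity)
    rw [tsum_congr this, ENNReal.tsum_mul_left]
    exact ENNReal.mul_ne_top ENNReal.ofReal_ne_top (aux_tsum_piPlus_ne_top hs')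
  have hae := MeasureTheory.ae_finite_setOf_mem (μ := (volume : Measure (Fin (m+1) → ℝ))) hsum_ne_top
  rw [MeasureTheory.ae_iff] at hae
  apply measure_mono_null _ hae
  rintro y ⟨hybox, happ⟩
  simp only [Set.mem_setOf_eq]
  intro hfin
  have h1 : ({q : Fin (m+1) → ℤ | ∃ p : ℤ, |(∑ i, y i * (q i:ℝ)) + (p:ℝ)| < DK.piPlus q ^ (-(v / ((m+1:ℕ):ℝ)))} \ {0}).Infinite :=
    happ.diff (Set.finite_singleton 0)
  apply h1
  apply hfin.subset
  rintro q ⟨hqQ, hq0⟩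
  simp only [Set.mem_singleton_iff] at hq0
  show y ∈ s q
  rw [hsdef]
  simp only [hq0, if_false]
  exact ⟨hybox, hqQ⟩

lemma aux_null (n : ℕ) (hn : n ≠ 0) (v : ℝ) (hv : (n:ℝ) < v) :
    volume {y : Fin n → ℝ | DK.vMultApprox v y} = 0 := by
  obtain ⟨m, rfl⟩ : ∃ m, n = m + 1 := ⟨n - 1, by omega⟩
  refine measure_mono_null ?_
    (measure_iUnion_null fun R : ℕ =>
      aux_box_null m v (by exact_mod_cast hv) R)
  intro y hy
  refine Set.mem_iUnion.mpr ⟨⌈‖y‖⌉₊, ?_, hy⟩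
  intro j
  calc |y j| = ‖y j‖ := rfl
    _ ≤ ‖y‖ := norm_le_pi_norm y j
    _ ≤ (⌈‖y‖⌉₊ : ℝ) := Nat.le_ceil _

lemma aux_mono {n : ℕ} (hn : n ≠ 0) {v v' : ℝ} (h : v' ≤ v) {y : Fin n → ℝ} :
    DK.vMultApprox v y → DK.vMultApprox v' y := by
  apply Set.Infinite.mono
  rintro q ⟨p, hp⟩
  refine ⟨p, lt_of_lt_of_le hp ?_⟩
  apply Real.rpow_le_rpow_of_exponent_le (aux_one_le_piPlus q)
  have hnpos : (0:ℝ) < (n:ℝ) := by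
    have := Nat.pos_of_ne_zero hn
    exact_mod_cast this
  rw [neg_le_neg_iff]
  gcongr

lemma aux_dirichlet {n : ℕ} (hn : n ≠ 0) (y : Fin n → ℝ) : DK.vMultApprox (n:ℝ) y := by
  have hnpos : 0 < n := Nat.pos_of_ne_zero hn
  set i₀ : Fin n := ⟨0, hnpos⟩ with hi₀
  set Q : ℤ → (Fin n → ℤ) := fun a => fun i => if i = i₀ then a else 0 with hQ
  have hQinj : Function.Injective Q := by
    intro a b hab
    have := congrFun hab i₀
    simpa [hQ] using this
  have hQsum : ∀ a : ℤ, ∀ z : Fin n → ℝ, (∑ i, z i * (Q a i : ℝ)) = z i₀ * (a:ℝ) := by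
    intro a z
    rw [Finset.sum_eq_single i₀]
    · simp [hQ]
    · intro b _ hb; simp [hQ, hb]
    · intro h; exact absurd (Finset.mem_univ i₀) h
  have hQpi : ∀ a : ℤ, a ≠ 0 → DK.piPlus (Q a) = |(a:ℝ)| := by
    intro a ha
    rw [DK.piPlus, Finset.prod_eq_single i₀]
    · simp [hQ, ha]
    · intro b _ hb; simp [hQ, hb]
    · intro h; exact absurd (Finset.mem_univ i₀) h
  have hexp : -((n:ℝ) / (n:ℝ)) = -1 := by
    rw [div_self (by exact_mod_cast hn : (n:ℝ) ≠ 0)]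
  rw [DK.vMultApprox]
  by_cases hirr : Irrational (y i₀)
  · have hinf := Real.infinite_rat_abs_sub_lt_one_div_den_sq_of_irrational hirr
    set S := {r : ℚ | |y i₀ - (r:ℝ)| < 1 / (r.den : ℝ) ^ 2} with hS
    have hmem : ∀ r ∈ S, (Q (r.den) ∈
        {q : Fin n → ℤ | ∃ p : ℤ, |(∑ i, y i * (q i:ℝ)) + (p:ℝ)| < DK.piPlus q ^ (-((n:ℝ)/(n:ℝ)))}) := by
      intro r hr
      have hden0 : (r.den : ℤ) ≠ 0 := by exact_mod_cast r.den_nz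
      have hdpos : (0:ℝ) < (r.den : ℝ) := by exact_mod_cast r.pos
      refine ⟨-r.num, ?_⟩
      rw [hQsum, hexp, hQpi _ hden0]
      push_cast
      have hrcast : (r:ℝ) = (r.num : ℝ) / (r.den : ℝ) := by
        rw [Rat.cast_def]
      have key : y i₀ * (r.den:ℝ) + -(r.num:ℝ) = (r.den:ℝ) * (y i₀ - (r:ℝ)) := by
        rw [hrcast]; field_simp; ring
      rw [key, abs_mul, abs_of_pos hdpos]
      have habs : (r.den:ℝ) * |y i₀ - (r:ℝ)| < (r.den:ℝ) * (1 / (r.den:ℝ)^2) :=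
        mul_lt_mul_of_pos_left hr hdpos
      calc (r.den:ℝ) * |y i₀ - (r:ℝ)| < (r.den:ℝ) * (1 / (r.den:ℝ)^2) := habs
        _ = (r.den:ℝ) ^ (-1 : ℝ) := by
            rw [Real.rpow_neg_one]
            field_simp
    -- denominators are unbounded
    by_contra hfin
    rw [Set.not_infinite] at hfin
    have hDinf : (Rat.den '' S).Infinite := by
      intro hDfin
      obtain ⟨B, hB⟩ := hDfin.bddAbove
      have hSsub : S ⊆ (fun r : ℚ => (r.num, r.den)) ⁻¹'
          (Set.Icc (-(⌈(|y i₀|+1) * (B:ℝ)⌉)) ⌈(|y i₀|+1) * (B:ℝ)⌉ ×ˢ (Rat.den '' S)) := by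
        intro r hr
        have hrden : r.den ∈ Rat.den '' S := ⟨r, hr, rfl⟩
        have hdB : (r.den : ℝ) ≤ (B:ℝ) := by exact_mod_cast hB hrden
        have hdpos : (0:ℝ) < (r.den : ℝ) := by exact_mod_cast r.pos
        have h1 : 1 / (r.den : ℝ)^2 ≤ 1 := by
          rw [div_le_one (by positivity)]
          nlinarith [hdpos, (by exact_mod_cast r.pos : (1:ℝ) ≤ (r.den:ℝ))]
        have hrb : |(r:ℝ)| ≤ |y i₀| + 1 := by
          have := hr
          rw [hS, Set.mem_setOf_eq] at this
          have h2 : |y i₀ - (r:ℝ)| < 1 := lt_of_lt_of_le this h1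
          have := abs_sub_abs_le_abs_sub (r:ℝ) (y i₀)
          rw [abs_sub_comm (r:ℝ) (y i₀)] at this
          linarith
        have hnum : |(r.num : ℝ)| ≤ (|y i₀|+1) * (B:ℝ) := by
          have hrcast : (r.num : ℝ) = (r:ℝ) * (r.den : ℝ) := by
            rw [Rat.cast_def]; field_simp
          rw [hrcast, abs_mul, abs_of_pos hdpos]
          have hd0 : (0:ℝ) ≤ (r.den:ℝ) := le_of_lt hdpos
          calc |(r:ℝ)| * (r.den:ℝ) ≤ (|y i₀|+1) * (r.den:ℝ) :=
                mul_le_mul_of_nonneg_right hrb hd0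
            _ ≤ (|y i₀|+1) * (B:ℝ) := mul_le_mul_of_nonneg_left hdB (by positivity)
        constructor
        · simp only [Set.mem_Icc]
          constructor
          · have : -((|y i₀|+1) * (B:ℝ)) ≤ (r.num:ℝ) := by
              have := neg_abs_le ((r.num:ℝ)); linarith
            have h3 : -(⌈(|y i₀|+1) * (B:ℝ)⌉ : ℝ) ≤ (r.num:ℝ) := by
              have := Int.le_ceil ((|y i₀|+1) * (B:ℝ))
              linarith
            exact_mod_cast h3
          · have h3 : (r.num:ℝ) ≤ (⌈(|y i₀|+1) * (B:ℝ)⌉ : ℝ) := by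
              have := Int.le_ceil ((|y i₀|+1) * (B:ℝ))
              have := le_abs_self ((r.num:ℝ))
              linarith
            exact_mod_cast h3
        · exact hrden
      have hSfin : S.Finite := by
        apply Set.Finite.subset _ hSsub
        apply Set.Finite.preimage
        · intro a _ b _ hab
          exact Rat.ext (congrArg Prod.fst hab) (congrArg Prod.snd hab)
        · exact Set.Finite.prod (Set.finite_Icc _ _) hDfin
      exact hinf hSfin
    apply hDinf
    have : Rat.den '' S ⊆ (fun q : Fin n → ℤ => (q i₀).toNat) '' {q : Fin n → ℤ | ∃ p : ℤ, |(∑ i, y i * (q i:ℝ)) + (p:ℝ)| < DK.piPlus q ^ (-((n:ℝ)/(n:ℝ)))} := by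
      rintro d ⟨r, hr, rfl⟩
      exact ⟨Q (r.den), hmem r hr, by simp [hQ]⟩
    exact Set.Finite.subset (hfin.image _) this
  · have hmem' : y i₀ ∈ Set.range ((↑) : ℚ → ℝ) := not_not.mp hirr
    obtain ⟨r, hr⟩ := hmem'
    have hden : (r.den : ℤ) ≠ 0 := by exact_mod_cast r.den_nz
    apply Set.infinite_of_injective_forall_mem
      (f := fun k : ℕ => Q (((k:ℤ)+1) * (r.den:ℤ)))
    · intro a b hab
      have h2 := hQinj hab
      have h3 : (a:ℤ)+1 = (b:ℤ)+1 := mul_right_cancel₀ hden h2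
      exact_mod_cast (by omega : (a:ℤ) = (b:ℤ))
    · intro k
      refine ⟨-(((k:ℤ)+1) * r.num), ?_⟩
      rw [hQsum]
      have hyden : y i₀ * (r.den : ℝ) = (r.num : ℝ) := by
        rw [← hr, Rat.cast_def]
        field_simp
      have hzero : y i₀ * (((((k:ℤ)+1) * (r.den:ℤ)) : ℤ):ℝ) + ((-(((k:ℤ)+1) * r.num) : ℤ):ℝ) = 0 := by
        push_cast
        linear_combination ((k:ℝ)+1) * hyden
      rw [hzero]
      simp only [abs_zero]
      exact Real.rpow_pos_of_pos (aux_piPlus_pos _) _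

/-- for Lebesgue-a.e. `y ∈ ℝⁿ` one has `ω^×(y) = n`; that is, Lebesgue
measure on `ℝⁿ` is strongly extremal. -/
theorem stmt14 (n : ℕ) :
    (∀ᵐ y ∂(volume : Measure (Fin n → ℝ)), DK.diophExpMult y = (n : ℝ≥0∞)) ∧
    DK.measDiophExpMult (volume : Measure (Fin n → ℝ)) = (n : ℝ≥0∞) := by
  by_cases hn : n = 0
  · subst hn
    have hempty : ∀ (v : ℝ) (y : Fin 0 → ℝ), ¬ DK.vMultApprox v y := by
      intro v y h
      exact h (Set.toFinite _)
    constructor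
    · apply MeasureTheory.ae_of_all
      intro y
      rw [DK.diophExpMult]
      have h0 : {e : ℝ≥0∞ | ∃ v : ℝ, 0 < v ∧ e = ENNReal.ofReal v ∧ DK.vMultApprox v y} = ∅ := by
        ext e
        simp only [Set.mem_setOf_eq, Set.mem_empty_iff_false, iff_false]
        rintro ⟨v, _, _, happ⟩
        exact hempty v y happ
      rw [h0, sSup_empty]
      simp
    · rw [DK.measDiophExpMult]
      have h0 : {e : ℝ≥0∞ | ∃ v : ℝ, 0 < v ∧ e = ENNReal.ofReal v ∧
          0 < volume {y : Fin 0 → ℝ | DK.vMultApprox v y}} = ∅ := by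
        ext e
        simp only [Set.mem_setOf_eq, Set.mem_empty_iff_false, iff_false]
        rintro ⟨v, _, _, hpos⟩
        have he : {y : Fin 0 → ℝ | DK.vMultApprox v y} = ∅ := by
          ext y; simp only [Set.mem_setOf_eq, Set.mem_empty_iff_false, iff_false]
          exact hempty v y
        rw [he] at hpos
        simp at hpos
      rw [h0, sSup_empty]
      simp
  · have hnR : (0:ℝ) < (n:ℝ) := by exact_mod_cast Nat.pos_of_ne_zero hn
    have hcast : ((n:ℕ) : ℝ≥0∞) = ENNReal.ofReal (n:ℝ) := (ENNReal.ofReal_natCast n).symm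
    constructor
    · have hae : ∀ᵐ y ∂(volume : Measure (Fin n → ℝ)),
          ∀ r : ℚ, (n:ℝ) < (r:ℝ) → ¬ DK.vMultApprox (r:ℝ) y := by
        rw [MeasureTheory.ae_all_iff]
        intro r
        by_cases hr : (n:ℝ) < (r:ℝ)
        · rw [MeasureTheory.ae_iff]
          apply measure_mono_null _ (aux_null n hn (r:ℝ) hr)
          intro y hy
          simp only [Set.mem_setOf_eq] at hy ⊢
          exact not_not.mp (fun hb => hy (fun _ => hb))
        · exact MeasureTheory.ae_of_all _ (fun y h => absurd h hr)
      filter_upwards [hae] with y hy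
      rw [DK.diophExpMult]
      apply le_antisymm
      · apply sSup_le
        rintro e ⟨v, hv, rfl, happ⟩
        rw [hcast]
        apply ENNReal.ofReal_le_ofReal
        by_contra hlt
        push_neg at hlt
        obtain ⟨r, hr1, hr2⟩ := exists_rat_btwn hlt
        exact hy r hr1 (aux_mono hn hr2.le happ)
      · rw [hcast]
        exact le_sSup ⟨(n:ℝ), hnR, rfl, aux_dirichlet hn y⟩
    · rw [DK.measDiophExpMult]
      apply le_antisymm
      · apply sSup_le
        rintro e ⟨v, hv, rfl, hpos⟩
        rw [hcast]
        apply ENNReal.ofReal_le_ofReal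
        by_contra hlt
        push_neg at hlt
        rw [aux_null n hn v hlt] at hpos
        exact lt_irrefl 0 hpos
      · rw [hcast]
        apply le_sSup
        refine ⟨(n:ℝ), hnR, rfl, ?_⟩
        have huniv : {y : Fin n → ℝ | DK.vMultApprox (n:ℝ) y} = Set.univ :=
          Set.eq_univ_of_forall (fun y => aux_dirichlet hn y)
        rw [huniv]
        exact isOpen_univ.measure_pos volume Set.univ_nonempty
end
end

section
/- A vector y ∈ ℝ^n is badly approximable if and only if there exists ε > 0 such that for all t > 0 and all q ∈ ℤ^{n+1} \ {0}, ‖g_t u_y q‖ ≥ ε; that is, y ∈ BA if and only if the trajectory {g_t u_y ℤ^{n+1} : t > 0} stays away from lattices containing nonzero vectors of norm less than ε. -/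
open MeasureTheory Metric Set Filter ENNReal

noncomputable section

section Stmt17Aux

open Matrix Real

private lemma uMat_mulVec' {n : ℕ} (y : Fin n → ℝ) (v : Fin (n+1) → ℝ) (i : Fin (n+1)) :
    (DK.uMat y).mulVec v i = if i = 0 then v 0 + ∑ j : Fin n, y j * v j.succ else v i := by
  rcases eq_or_ne i 0 with h | h
  · subst h
    simp only [DK.uMat, Matrix.mulVec, dotProduct, Matrix.of_apply, if_pos rfl]
    rw [Fin.sum_univ_succ]
    simp [Fin.succ_ne_zero]
  · simp only [DK.uMat, Matrix.mulVec, dotProduct, Matrix.of_apply, if_neg h]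
    simp [Finset.sum_ite_eq']

private lemma latVec' {n : ℕ} (t : ℝ) (y : Fin n → ℝ) (v : Fin (n+1) → ℝ) (i : Fin (n+1)) :
    ((DK.gMat n t * DK.uMat y).mulVec v) i =
      (if i = 0 then (2:ℝ) ^ ((n:ℝ)*t) * (v 0 + ∑ j : Fin n, y j * v j.succ)
       else (2:ℝ) ^ (-t) * v i) := by
  rw [← Matrix.mulVec_mulVec, DK.gMat, Matrix.mulVec_diagonal, uMat_mulVec']
  rcases eq_or_ne i 0 with h | h <;> simp [h]

private lemma one_le_abs_cast {a : ℤ} (h : a ≠ 0) : (1:ℝ) ≤ |(a:ℝ)| := by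
  have : (1:ℤ) ≤ |a| := Int.one_le_abs h
  calc (1:ℝ) = ((1:ℤ):ℝ) := by norm_num
  _ ≤ ((|a|:ℤ):ℝ) := by exact_mod_cast this
  _ = |(a:ℝ)| := by push_cast; ring

private lemma abs_le_inorm {m : ℕ} (q : Fin m → ℤ) (i : Fin m) : |(q i : ℝ)| ≤ DK.inorm q := by
  have := norm_le_pi_norm (fun j => ((q j : ℝ) : ℝ)) i
  simpa [Real.norm_eq_abs, DK.inorm] using this

private lemma one_le_inorm {m : ℕ} {q : Fin m → ℤ} (h : q ≠ 0) : 1 ≤ DK.inorm q := by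
  obtain ⟨i, hi⟩ := Function.ne_iff.mp h
  refine le_trans ?_ (abs_le_inorm q i)
  exact one_le_abs_cast (by simpa using hi)

private lemma comp_le_latNorm {n : ℕ} (t : ℝ) (y : Fin n → ℝ) (q : Fin (n+1) → ℤ)
    (i : Fin (n+1)) :
    |((DK.gMat n t * DK.uMat y).mulVec (fun j => (q j : ℝ))) i| ≤ DK.latNorm t y q := by
  have := norm_le_pi_norm ((DK.gMat n t * DK.uMat y).mulVec (fun j => (q j : ℝ))) i
  simpa [Real.norm_eq_abs, DK.latNorm] using this

end Stmt17Aux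

/-- Dani correspondence: `y ∈ ℝⁿ` is badly approximable iff there is
`ε > 0` such that `‖g_t u_y q‖ ≥ ε` for all `t > 0` and all `q ∈ ℤ^{n+1} \ {0}`. -/
theorem stmt17 {n : ℕ} (y : Fin n → ℝ) :
    DK.BadlyApprox y ↔
      ∃ ε > (0 : ℝ), ∀ t : ℝ, 0 < t → ∀ q : Fin (n + 1) → ℤ, q ≠ 0 →
        ε ≤ DK.latNorm t y q := by
  constructor
  · rintro ⟨c, hc, hBA⟩
    refine ⟨min 1 c, lt_min one_pos hc, ?_⟩
    intro t ht q hq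
    set ε := min 1 c with hεdef
    have hε0 : 0 < ε := lt_min one_pos hc
    have hε1 : ε ≤ 1 := min_le_left _ _
    have hεc : ε ≤ c := min_le_right _ _
    have h2t : (0:ℝ) < (2:ℝ) ^ t := Real.rpow_pos_of_pos two_pos t
    have h2nt : (0:ℝ) < (2:ℝ) ^ ((n:ℝ)*t) := Real.rpow_pos_of_pos two_pos _
    by_cases hq' : (fun i : Fin n => q i.succ) = 0
    · -- tail is zero, so q 0 ≠ 0
      have hq0 : q 0 ≠ 0 := by
        intro h0
        apply hq
        funext i
        refine Fin.cases ?_ ?_ i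
        · exact h0
        · intro j; exact congrFun hq' j
      have hsum : (∑ j : Fin n, y j * ((q j.succ : ℝ))) = 0 := by
        apply Finset.sum_eq_zero
        intro j _
        have : q j.succ = 0 := congrFun hq' j
        simp [this]
      have hw0 := comp_le_latNorm t y q 0
      rw [latVec'] at hw0
      rw [if_pos rfl] at hw0
      have h1 : (1:ℝ) ≤ (2:ℝ) ^ ((n:ℝ)*t) := by
        calc (1:ℝ) = (2:ℝ) ^ (0:ℝ) := (Real.rpow_zero 2).symm
        _ ≤ (2:ℝ) ^ ((n:ℝ)*t) := Real.rpow_le_rpow_of_exponent_le one_le_two (by positivity)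
      refine le_trans ?_ hw0
      rw [hsum, add_zero, abs_mul, abs_of_pos h2nt]
      calc ε ≤ 1 := hε1
      _ = 1 * 1 := (one_mul 1).symm
      _ ≤ (2:ℝ) ^ ((n:ℝ)*t) * |((q 0 : ℝ))| :=
          mul_le_mul h1 (one_le_abs_cast hq0) zero_le_one (le_trans zero_le_one h1)
    · -- tail nonzero
      set q' : Fin n → ℤ := fun i => q i.succ with hq'def
      have hQ1 : (1:ℝ) ≤ DK.inorm q' := one_le_inorm hq'
      have hQ0 : (0:ℝ) < DK.inorm q' := lt_of_lt_of_le one_pos hQ1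
      by_cases hcase : ∃ i : Fin n, ε ≤ (2:ℝ)^(-t) * |((q i.succ : ℝ))|
      · obtain ⟨i, hi⟩ := hcase
        refine hi.trans ?_
        have hwi := comp_le_latNorm t y q i.succ
        rw [latVec'] at hwi
        rw [if_neg (Fin.succ_ne_zero i)] at hwi
        rw [abs_mul, abs_of_pos (Real.rpow_pos_of_pos two_pos (-t))] at hwi
        exact hwi
      · push_neg at hcase
        have h2tt : (2:ℝ)^t * (2:ℝ)^(-t) = 1 := by
          rw [← Real.rpow_add two_pos]; simp
        have hQle : DK.inorm q' ≤ ε * (2:ℝ)^t := by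
          have : DK.inorm q' = ‖fun i : Fin n => ((q' i : ℝ))‖ := rfl
          rw [this]
          refine (pi_norm_le_iff_of_nonneg (by positivity)).mpr ?_
          intro i
          have h := (hcase i).le
          rw [Real.norm_eq_abs]
          calc |((q' i : ℝ))| = ((2:ℝ)^t * (2:ℝ)^(-t)) * |((q' i : ℝ))| := by
                rw [h2tt, one_mul]
          _ = (2:ℝ)^t * ((2:ℝ)^(-t) * |((q i.succ : ℝ))|) := by rw [mul_assoc]
          _ ≤ (2:ℝ)^t * ε := mul_le_mul_of_nonneg_left h h2t.le
          _ = ε * (2:ℝ)^t := mul_comm _ _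
        have hrpow : (ε * (2:ℝ)^t) ^ (-(n:ℝ)) ≤ (DK.inorm q') ^ (-(n:ℝ)) :=
          Real.rpow_le_rpow_of_nonpos hQ0 hQle (neg_nonpos.mpr (Nat.cast_nonneg n))
        have hεinv : (1:ℝ) ≤ ε ^ (-(n:ℝ)) :=
          Real.one_le_rpow_of_pos_of_le_one_of_nonpos hε0 hε1 (neg_nonpos.mpr (Nat.cast_nonneg n))
        have hsplit : (ε * (2:ℝ)^t) ^ (-(n:ℝ)) = ε ^ (-(n:ℝ)) * ((2:ℝ)^((n:ℝ)*t))⁻¹ := by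
          rw [Real.mul_rpow hε0.le h2t.le, ← Real.rpow_mul two_pos.le,
            show t * (-(n:ℝ)) = -((n:ℝ)*t) by ring, Real.rpow_neg two_pos.le]
        have hBAq := hBA q' hq' (q 0)
        have hchain : ε * ((2:ℝ)^((n:ℝ)*t))⁻¹ < |(∑ i : Fin n, y i * ((q' i : ℝ))) + ((q 0 : ℝ))| := by
          calc ε * ((2:ℝ)^((n:ℝ)*t))⁻¹ = ε * 1 * ((2:ℝ)^((n:ℝ)*t))⁻¹ := by ring
          _ ≤ c * ε ^ (-(n:ℝ)) * ((2:ℝ)^((n:ℝ)*t))⁻¹ := by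
              have h1 : ε * 1 ≤ c * ε ^ (-(n:ℝ)) :=
                mul_le_mul hεc hεinv zero_le_one hc.le
              exact mul_le_mul_of_nonneg_right h1 (by positivity)
          _ = c * (ε * (2:ℝ)^t) ^ (-(n:ℝ)) := by rw [hsplit]; ring
          _ ≤ c * (DK.inorm q') ^ (-(n:ℝ)) := mul_le_mul_of_nonneg_left hrpow hc.le
          _ < _ := hBAq
        have hw0 := comp_le_latNorm t y q 0
        rw [latVec'] at hw0
        rw [if_pos rfl] at hw0
        refine le_trans ?_ hw0
        rw [abs_mul, abs_of_pos h2nt]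
        have ha : |(∑ i : Fin n, y i * ((q' i : ℝ))) + ((q 0 : ℝ))| =
            |((q 0 : ℝ)) + ∑ j : Fin n, y j * ((q j.succ : ℝ))| := by
          rw [add_comm]
        rw [ha] at hchain
        have := mul_lt_mul_of_pos_left hchain h2nt
        rw [show (2:ℝ)^((n:ℝ)*t) * (ε * ((2:ℝ)^((n:ℝ)*t))⁻¹) = ε by
          field_simp] at this
        exact this.le
  · rintro ⟨ε₀, hε₀, H⟩
    set ε := min ε₀ 1 with hεdef
    have hε0 : 0 < ε := lt_min hε₀ one_pos
    have hε1 : ε ≤ 1 := min_le_right _ _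
    refine ⟨ε * (ε/2)^n / 2, by positivity, ?_⟩
    intro q' hq' p
    set Q := DK.inorm q' with hQdef
    have hQ1 : (1:ℝ) ≤ Q := one_le_inorm hq'
    have hQ0 : (0:ℝ) < Q := lt_of_lt_of_le one_pos hQ1
    have hT1 : (1:ℝ) < 2*Q/ε := by
      rw [lt_div_iff₀ hε0]; nlinarith
    set t := Real.logb 2 (2*Q/ε) with htdef
    have ht : 0 < t := Real.logb_pos one_lt_two hT1
    have h2t : (2:ℝ)^t = 2*Q/ε := Real.rpow_logb two_pos (by norm_num) (by positivity)
    have h2tpos : (0:ℝ) < (2:ℝ)^t := Real.rpow_pos_of_pos two_pos t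
    have h2nt : (0:ℝ) < (2:ℝ) ^ ((n:ℝ)*t) := Real.rpow_pos_of_pos two_pos _
    set q : Fin (n+1) → ℤ := Fin.cons p q' with hqdef
    have hqne : q ≠ 0 := by
      obtain ⟨i, hi⟩ := Function.ne_iff.mp hq'
      intro h0
      apply hi
      have := congrFun h0 i.succ
      simpa [hqdef, Fin.cons_succ] using this
    have hH : ε ≤ DK.latNorm t y q := le_trans (min_le_left _ _) (H t ht q hqne)
    -- the tail components are at most ε/2
    have h2tinv : (2:ℝ)^(-t) = ε/(2*Q) := by
      rw [Real.rpow_neg two_pos.le, h2t]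
      field_simp
    set w := (DK.gMat n t * DK.uMat y).mulVec (fun i => ((q i : ℝ))) with hwdef
    have hln : DK.latNorm t y q = ‖w‖ := rfl
    have hmax : DK.latNorm t y q ≤ max (|w 0|) (ε/2) := by
      have hnn : (0:ℝ) ≤ max (|w 0|) (ε/2) := le_max_of_le_right (by positivity)
      rw [hln]
      refine (pi_norm_le_iff_of_nonneg hnn).mpr ?_
      intro i
      rw [Real.norm_eq_abs]
      refine Fin.cases ?_ ?_ i
      · exact le_max_left _ _
      · intro j
        refine le_trans ?_ (le_max_right _ _)
        have hwj : w j.succ = (2:ℝ)^(-t) * ((q j.succ : ℝ)) := by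
          rw [hwdef, latVec', if_neg (Fin.succ_ne_zero j)]
        rw [hwj, abs_mul, abs_of_pos (Real.rpow_pos_of_pos two_pos (-t)), h2tinv]
        have hle : |((q j.succ : ℝ))| ≤ Q := by
          rw [show q j.succ = q' j by simp [hqdef]]
          exact abs_le_inorm q' j
        calc ε/(2*Q) * |((q j.succ : ℝ))| ≤ ε/(2*Q) * Q :=
              mul_le_mul_of_nonneg_left hle (by positivity)
        _ = ε/2 := by field_simp
    have hw0 : ε ≤ |w 0| := by
      rcases le_max_iff.mp (le_trans hH hmax) with h | h
      · exact h
      · linarith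
    -- compute w 0
    set a : ℝ := (∑ i : Fin n, y i * ((q' i : ℝ))) + (p:ℝ) with hadef
    have hw0c : w 0 = (2:ℝ)^((n:ℝ)*t) * (((p:ℤ):ℝ) + ∑ j : Fin n, y j * ((q' j : ℝ))) := by
      rw [hwdef, latVec', if_pos rfl]
      try simp [hqdef, Fin.cons_succ]
    have hw0eq : |w 0| = (2:ℝ)^((n:ℝ)*t) * |a| := by
      rw [hw0c, abs_mul, abs_of_pos h2nt, hadef, add_comm]
    rw [hw0eq] at hw0
    -- 2^{nt} = (2Q/ε)^n
    have hpow : (2:ℝ)^((n:ℝ)*t) = (2*Q/ε)^n := by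
      rw [mul_comm (n:ℝ) t, Real.rpow_mul two_pos.le, h2t, Real.rpow_natCast]
    rw [hpow] at hw0
    have hQn : Q ^ (-(n:ℝ)) = (Q^n)⁻¹ := by
      rw [Real.rpow_neg hQ0.le, Real.rpow_natCast]
    rw [hQn]
    have hTn : (0:ℝ) < (2*Q/ε)^n := by positivity
    have hstep : ε * ((2*Q/ε)^n)⁻¹ ≤ |a| := by
      rw [mul_comm] at hw0
      calc ε * ((2*Q/ε)^n)⁻¹ ≤ (|a| * (2*Q/ε)^n) * ((2*Q/ε)^n)⁻¹ :=
            mul_le_mul_of_nonneg_right hw0 (by positivity)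
      _ = |a| := by field_simp
    have hkey : ε * (ε/2)^n / 2 * (Q^n)⁻¹ < ε * ((2*Q/ε)^n)⁻¹ := by
      have heq : ε * ((2*Q/ε)^n)⁻¹ = ε * (ε/2)^n * (Q^n)⁻¹ := by
        rw [div_pow, mul_pow, div_pow]
        field_simp
        try ring
      rw [heq]
      have hpos : (0:ℝ) < ε * (ε/2)^n * (Q^n)⁻¹ := by positivity
      linarith
    exact lt_of_lt_of_le hkey hstep
end
end
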